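/- Let q ≥ 2, d ≥ 2, z ∈ {1,...,q-1}, n = qd, and α ∈ (0,1). Suppose x₀, ..., x_{d-1} ∈ {0,...,q-1} satisfy ∑ xᵢ = n - z - d. Define a₀ = 1, a_t = 1 + tq + ((x₁+...+x_t) mod q) for t = 1,...,d-1, b₀ = 1+q, b_t = 1+(t+1)q + ((x₁+...+x_t) mod q) for t = 1,...,d-2, and b_{d-1} = 1 + ((q - x₀) mod q). Let A = D(⊕_{k=1}^d C_q) + α∑_{t=0}^{d-1} E_{a_t,b_t}, where D is diagonal with entry 1-α at positions a_t and 1 elsewhere, and E_{i,j} is the matrix unit. Then A is a stochastic matrix with characteristic polynomial (t^q - (1-α))^d - α^d t^z. -/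

import Mathlib

open Polynomial Matrix Finset
open scoped Fin.NatCast Fin.CommRing

lemma perm_classify {m : ℕ} (σ : Equiv.Perm (Fin (m+2)))
    (h : ∀ i, σ i = i ∨ σ i = i + 1) : σ = 1 ∨ σ = finRotate (m+2) := by
  by_cases h1 : σ = 1
  · exact Or.inl h1
  · right
    have hne : ∃ i, σ i ≠ i := by
      by_contra hc
      push_neg at hc
      exact h1 (Equiv.ext fun i => hc i)
    obtain ⟨i0, hi0⟩ := hne
    have hi0' : σ i0 = i0 + 1 := (h i0).resolve_left hi0
    have hself : ∀ j : Fin (m+2), j + 1 ≠ j := by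
      intro j hj
      have h10 : (1 : Fin (m+2)) = 0 := by
        have := add_right_cancel (a := (1:Fin (m+2))) (b := j) (c := 0)
        apply this
        simpa [add_comm] using hj
      simp [Fin.ext_iff] at h10
    have key : ∀ k : ℕ, σ (i0 + (k : Fin (m+2))) = i0 + (k : Fin (m+2)) + 1 := by
      intro k
      induction k with
      | zero => simpa using hi0'
      | succ k ih =>
        have hcast : ((k+1 : ℕ) : Fin (m+2)) = (k : Fin (m+2)) + 1 := by
          push_cast; ring
        rw [hcast, ← add_assoc]
        rcases h (i0 + (k:Fin (m+2)) + 1) with h' | h'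
        · exfalso
          have heq : σ (i0 + (k:Fin (m+2))) = σ (i0 + (k:Fin (m+2)) + 1) := by
            rw [ih, h']
          have := σ.injective heq
          exact hself _ this.symm
        · exact h'
    ext j
    have hj : j = i0 + ((j - i0).val : Fin (m+2)) := by
      rw [Fin.cast_val_eq_self]
      ring
    rw [finRotate_succ_apply]
    conv_lhs => rw [hj]
    rw [key]
    rw [← hj]

lemma det_cycle {R : Type*} [CommRing R] {m : ℕ} [NeZero m] (hm : 2 ≤ m)
    (M : Matrix (Fin m) (Fin m) R)
    (h : ∀ i j : Fin m, j ≠ i → j ≠ i + 1 → M i j = 0) :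
    M.det = ∏ i, M i i + (-1)^(m+1) * ∏ i, M i (i+1) := by
  obtain ⟨m, rfl⟩ : ∃ m', m = m' + 2 := ⟨m - 2, by omega⟩
  have hTd : M.det = Mᵀ.det := (Matrix.det_transpose M).symm
  rw [hTd, Matrix.det_apply']
  have hzero : ∀ σ ∈ (univ : Finset (Equiv.Perm (Fin (m+2)))),
      σ ∉ ({1, finRotate (m+2)} : Finset (Equiv.Perm (Fin (m+2)))) →
      (Equiv.Perm.sign σ : ℤ) * ∏ i, Mᵀ (σ i) i = 0 := by
    intro σ _ hσ
    simp only [Finset.mem_insert, Finset.mem_singleton] at hσ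
    push_neg at hσ
    have hnall : ¬ (∀ i, σ i = i ∨ σ i = i + 1) := by
      intro hall
      rcases perm_classify σ hall with h' | h'
      · exact hσ.1 h'
      · exact hσ.2 h'
    push_neg at hnall
    obtain ⟨i, hi1, hi2⟩ := hnall
    have hz : Mᵀ (σ i) i = 0 := h i (σ i) hi1 hi2
    exact mul_eq_zero_of_right _ (Finset.prod_eq_zero (Finset.mem_univ i) hz)
  rw [← Finset.sum_subset (Finset.subset_univ ({1, finRotate (m+2)} : Finset (Equiv.Perm (Fin (m+2))))) hzero]
  have hne : (1 : Equiv.Perm (Fin (m+2))) ≠ finRotate (m+2) := by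
    intro hcontra
    have hc0 : (0 : Fin (m+2)) = finRotate (m+2) 0 := by rw [← hcontra]; rfl
    rw [finRotate_succ_apply, zero_add] at hc0
    simp [Fin.ext_iff] at hc0
  rw [Finset.sum_pair hne]
  congr 1
  · simp
  · simp only [sign_finRotate, finRotate_succ_apply, transpose_apply]
    push_cast
    ring

variable {F : Type*} [Field F]

/-- block of the weighted cycle matrix `t·I − C_w` with special row `sp` of weight `γ`. -/
def cycBlk (q : ℕ) [NeZero q] (t γ : F) (sp : Fin q) : Matrix (Fin q) (Fin q) F :=
  fun p r => (if p = r then t else 0) - (if r = p + 1 then (if p = sp then γ else 1) else 0)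

/-- explicit inverse of `cycBlk`. -/
def invBlk (q : ℕ) [NeZero q] (t γ : F) (sp : Fin q) : Matrix (Fin q) (Fin q) F :=
  fun p r => (if ((sp - p : Fin q) : ℕ) < ((r - p : Fin q) : ℕ) then γ else 1)
      * t ^ (q - 1 - ((r - p : Fin q) : ℕ)) / (t ^ q - γ)

lemma cycBlk_mul_invBlk (q : ℕ) (t γ : F) (hden : t ^ (q+2) - γ ≠ 0) (sp : Fin (q+2)) :
    cycBlk (q+2) t γ sp * invBlk (q+2) t γ sp = 1 := by
  ext p r
  rw [mul_apply]
  simp only [cycBlk, sub_mul, ite_mul, zero_mul, Finset.sum_sub_distrib,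
    Finset.sum_ite_eq, Finset.sum_ite_eq', Finset.mem_univ, if_true]
  rw [Matrix.one_apply]
  by_cases hpr : p = r
  · subst hpr
    have h1 : invBlk (q+2) t γ sp p p = t ^ (q+1) / (t^(q+2) - γ) := by
      simp [invBlk, sub_self]
    have h2 : (if p = sp then γ else 1) * invBlk (q+2) t γ sp (p+1) p = γ / (t^(q+2) - γ) := by
      have hsub : (p - (p+1) : Fin (q+2)) = -1 := by ring
      have hval : ((p - (p+1) : Fin (q+2)) : ℕ) = q+1 := by rw [hsub, Fin.coe_neg_one]
      by_cases hs : p = sp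
      · subst hs
        have hc : ¬ (((p - (p+1) : Fin (q+2)) : ℕ) < ((p - (p+1) : Fin (q+2)) : ℕ)) := lt_irrefl _
        simp only [invBlk, hval, if_pos rfl]
        rw [if_neg (lt_irrefl _)]
        simp [show q+2-1-(q+1) = 0 from by omega, div_eq_mul_inv]
      · have hne : (sp - (p+1) : Fin (q+2)) ≠ -1 := by
          intro hcon
          apply hs
          have : sp = -1 + (p + 1) := by rw [← hcon]; ring
          rw [this]; ring
        have hlt : ((sp - (p+1) : Fin (q+2)) : ℕ) < q + 1 := by
          have h1 := (sp - (p+1) : Fin (q+2)).isLt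
          rcases Nat.lt_or_ge ((sp - (p+1) : Fin (q+2)) : ℕ) (q+1) with h | h
          · exact h
          · exfalso
            apply hne
            have : ((sp - (p+1) : Fin (q+2)) : ℕ) = q+1 := by omega
            have := Fin.ext (a := (sp - (p+1) : Fin (q+2))) (b := (-1 : Fin (q+2)))
              (by rw [this, Fin.coe_neg_one])
            exact this
        simp only [invBlk, hval, if_neg hs, if_pos hlt]
        simp [show q+2-1-(q+1) = 0 from by omega, div_eq_mul_inv]
    rw [if_pos rfl, ← ite_mul, h1, h2]
    have hpow : t * t ^ (q+1) = t ^ (q+2) := (pow_succ' t (q+1)).symm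
    field_simp
    linear_combination hpow
  · rw [if_neg hpr]
    have hu : (r - p : Fin (q+2)) ≠ 0 := sub_ne_zero.mpr (Ne.symm hpr)
    set ℓ := ((r - p : Fin (q+2)) : ℕ) with hℓ
    have hℓ0 : ℓ ≠ 0 := fun hc => hu (Fin.ext (by simp [← hℓ, hc]))
    have hℓlt : ℓ < q + 2 := (r - p : Fin (q+2)).isLt
    have hsub1 : (r - (p+1) : Fin (q+2)) = (r - p) - 1 := by ring
    have hval1 : ((r - (p+1) : Fin (q+2)) : ℕ) = ℓ - 1 := by
      rw [hsub1, Fin.coe_sub_one, if_neg hu]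
    have hexp : t * t ^ (q + 1 - ℓ) = t ^ (q + 1 - (ℓ - 1)) := by
      rw [← pow_succ']
      congr 1
      omega
    by_cases hs : p = sp
    · subst hs
      have hc1 : ((p - p : Fin (q+2)) : ℕ) < ℓ := by
        rw [sub_self]; simpa using Nat.pos_of_ne_zero hℓ0
      have hc2 : ¬ (((p - (p+1) : Fin (q+2)) : ℕ) < ℓ - 1) := by
        have : (p - (p+1) : Fin (q+2)) = -1 := by ring
        rw [this, Fin.coe_neg_one]
        omega
      simp only [invBlk, hval1, if_pos hc1, if_neg hc2, if_pos rfl, ← hℓ, if_true, ite_self,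
        show q+2-1 = q+1 from rfl]
      field_simp
      linear_combination γ * hexp
    · have hv : (sp - p : Fin (q+2)) ≠ 0 := sub_ne_zero.mpr (Ne.symm hs)
      have hvval : ((sp - (p+1) : Fin (q+2)) : ℕ) = ((sp - p : Fin (q+2)) : ℕ) - 1 := by
        have : (sp - (p+1) : Fin (q+2)) = (sp - p) - 1 := by ring
        rw [this, Fin.coe_sub_one, if_neg hv]
      have hvpos : ((sp - p : Fin (q+2)) : ℕ) ≠ 0 := fun hc => hv (Fin.ext (by simp [hc]))
      have hcond : (((sp - (p+1) : Fin (q+2)) : ℕ) < ℓ - 1) ↔ (((sp - p : Fin (q+2)) : ℕ) < ℓ) := by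
        rw [hvval]
        omega
      simp only [invBlk, hval1, if_neg hs, ← hℓ, show q+2-1 = q+1 from rfl]
      by_cases hc : ((sp - p : Fin (q+2)) : ℕ) < ℓ
      · rw [if_pos hc, if_pos (hcond.mpr hc)]
        field_simp
        linear_combination γ * hexp
      · rw [if_neg hc, if_neg (fun h => hc (hcond.mp h))]
        field_simp
        linear_combination hexp

lemma det_cycBlk (q : ℕ) (t γ : F) (sp : Fin (q+2)) :
    (cycBlk (q+2) t γ sp).det = t^(q+2) - γ := by
  rw [det_cycle (by omega) _ (fun p r h1 h2 => by
    simp [cycBlk, if_neg (Ne.symm h1), if_neg h2])]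
  have hdiag : ∀ p : Fin (q+2), cycBlk (q+2) t γ sp p p = t := by
    intro p
    have : p ≠ p + 1 := by
      intro h
      have : (0 : Fin (q+2)) = 1 := by
        have := add_right_cancel (a := (0:Fin (q+2))) (b := p) (c := 1)
        apply this
        simpa [add_comm] using h
      simp [Fin.ext_iff] at this
    simp [cycBlk, if_neg this]
  have hoff : ∀ p : Fin (q+2), cycBlk (q+2) t γ sp p (p+1)
      = -(if p = sp then γ else 1) := by
    intro p
    have : p ≠ p + 1 := by
      intro h
      have : (0 : Fin (q+2)) = 1 := by
        have := add_right_cancel (a := (0:Fin (q+2))) (b := p) (c := 1)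
        apply this
        simpa [add_comm] using h
      simp [Fin.ext_iff] at this
    simp [cycBlk, if_neg this]
  rw [Finset.prod_congr rfl (fun p _ => hdiag p), Finset.prod_congr rfl (fun p _ => hoff p)]
  rw [Finset.prod_const, Finset.card_univ, Fintype.card_fin]
  have : ∏ p : Fin (q+2), -(if p = sp then γ else 1)
      = (-1)^(q+2) * ∏ p : Fin (q+2), (if p = sp then γ else 1) := by
    calc (∏ p : Fin (q+2), -(if p = sp then γ else 1))
        = ∏ p : Fin (q+2), (-1) * (if p = sp then γ else 1) :=
          Finset.prod_congr rfl (fun p _ => by ring)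
      _ = (∏ _p : Fin (q+2), (-1:F)) * ∏ p : Fin (q+2), (if p = sp then γ else 1) :=
          Finset.prod_mul_distrib
      _ = (-1)^(q+2) * ∏ p : Fin (q+2), (if p = sp then γ else 1) := by
          rw [Finset.prod_const, Finset.card_univ, Fintype.card_fin]
  rw [this, Finset.prod_ite_eq' Finset.univ sp (fun _ => γ), if_pos (Finset.mem_univ sp)]
  have hodd : Odd ((q+3) + (q+2)) := by
    refine ⟨q+2, by ring⟩
  calc t^(q+2) + (-1)^(q+2+1) * ((-1)^(q+2) * γ)
      = t^(q+2) + ((-1)^((q+3)+(q+2))) * γ := by ring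
    _ = t^(q+2) - γ := by rw [hodd.neg_one_pow]; ring

set_option maxHeartbeats 1000000 in
lemma det_main (q d z : ℕ) (t β γ : F) (hden : t ^ (q+2) - γ ≠ 0)
    (pa pb : Fin (d+2) → Fin (q+2)) (xx : Fin (d+2) → ℕ) (hxx : ∀ s, xx s < q+2)
    (hpath : ∀ s, pa (s+1) = pb s + (xx s : Fin (q+2)))
    (hzsum : ∑ s : Fin (d+2), (q + 1 - xx s) = z) :
    (Matrix.det (Matrix.of fun i j : Fin (q+2) × Fin (d+2) =>
      (if i = j then t else 0)
      - (if j.2 = i.2 ∧ j.1 = i.1 + 1 then (if i.1 = pa i.2 then γ else 1) else 0)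
      - (if i.1 = pa i.2 ∧ j = (pb i.2, i.2 + 1) then β else 0)))
    = (t^(q+2) - γ)^(d+2) - β^(d+2) * t^z := by
  set D := t^(q+2) - γ with hD
  set A0 : Matrix (Fin (q+2) × Fin (d+2)) (Fin (q+2) × Fin (d+2)) F :=
    Matrix.blockDiagonal (fun k => cycBlk (q+2) t γ (pa k)) with hA0
  set R0 : Matrix (Fin (q+2) × Fin (d+2)) (Fin (q+2) × Fin (d+2)) F :=
    Matrix.blockDiagonal (fun k => invBlk (q+2) t γ (pa k)) with hR0
  set U : Matrix (Fin (q+2) × Fin (d+2)) (Fin (d+2)) F :=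
    Matrix.of (fun i s => if i = (pa s, s) then 1 else 0) with hU
  set V : Matrix (Fin (d+2)) (Fin (q+2) × Fin (d+2)) F :=
    Matrix.of (fun s j => if j = (pb s, s + 1) then β else 0) with hV
  have hself : ∀ s : Fin (d+2), s ≠ s + 1 := by
    intro s h
    have h01 : (0 : Fin (d+2)) = 1 := by
      have := add_right_cancel (a := (0:Fin (d+2))) (b := s) (c := 1)
      apply this
      simpa [add_comm] using h
    simp [Fin.ext_iff] at h01
  have hUV : ∀ i j, (U * V) i j
      = (if i.1 = pa i.2 ∧ j = (pb i.2, i.2 + 1) then β else 0) := by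
    intro i j
    rw [Matrix.mul_apply]
    rw [Finset.sum_eq_single i.2]
    · by_cases h1 : i.1 = pa i.2
      · have hi : i = (pa i.2, i.2) := Prod.ext h1 rfl
        rw [hU, hV]
        simp only [Matrix.of_apply, ← hi]
        simp [h1]
      · have hi : i ≠ (pa i.2, i.2) := fun hc => h1 (by rw [hc])
        rw [hU, hV]
        simp only [Matrix.of_apply, if_neg hi, zero_mul]
        rw [if_neg (fun hc : i.1 = pa i.2 ∧ j = (pb i.2, i.2+1) => h1 hc.1)]
    · intro s _ hs
      have hi : i ≠ (pa s, s) := fun hc => hs (by rw [hc])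
      rw [hU]
      simp [Matrix.of_apply, if_neg hi]
    · intro h
      exact absurd (Finset.mem_univ i.2) h
  -- the matrix in question is A0 - U * V
  have hNsplit : (Matrix.of fun i j : Fin (q+2) × Fin (d+2) =>
      (if i = j then t else 0)
      - (if j.2 = i.2 ∧ j.1 = i.1 + 1 then (if i.1 = pa i.2 then γ else 1) else 0)
      - (if i.1 = pa i.2 ∧ j = (pb i.2, i.2 + 1) then β else 0)) = A0 - U * V := by
    ext i j
    rw [Matrix.sub_apply, hUV]
    rcases i with ⟨p, k⟩
    rcases j with ⟨r, l⟩
    simp only [Matrix.of_apply]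
    congr 1
    by_cases hkl : k = l
    · subst hkl
      have hblk : A0 (p,k) (r,k) = cycBlk (q+2) t γ (pa k) p r := by
        rw [hA0, Matrix.blockDiagonal_apply_eq]
      rw [hblk]
      simp only [cycBlk]
      congr 1
      · simp [Prod.mk.injEq]
      · simp
    · have hblk : A0 (p,k) (r,l) = 0 := Matrix.blockDiagonal_apply_ne _ p r hkl
      rw [hblk]
      have h1 : ((p,k) : Fin (q+2) × Fin (d+2)) ≠ (r,l) := fun hc => hkl (congrArg Prod.snd hc)
      rw [if_neg h1, if_neg (fun hc : l = k ∧ r = p + 1 => hkl (Eq.symm hc.1))]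
      ring
  rw [hNsplit]
  have hAR : A0 * R0 = 1 := by
    have hfun : (fun k => cycBlk (q+2) t γ (pa k) * invBlk (q+2) t γ (pa k))
        = (1 : Fin (d+2) → Matrix (Fin (q+2)) (Fin (q+2)) F) :=
      funext fun k => cycBlk_mul_invBlk q t γ hden (pa k)
    rw [hA0, hR0, ← Matrix.blockDiagonal_mul, hfun, Matrix.blockDiagonal_one]
  have hdetA0 : A0.det = D^(d+2) := by
    rw [hA0, Matrix.det_blockDiagonal]
    rw [Finset.prod_congr rfl (fun k _ => det_cycBlk q t γ (pa k))]
    rw [Finset.prod_const, Finset.card_univ, Fintype.card_fin]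
  have hDne : D ≠ 0 := hden
  have hUnit : IsUnit A0.det := by
    rw [hdetA0]
    exact (pow_ne_zero _ hDne).isUnit
  have hinv : A0⁻¹ = R0 := Matrix.inv_eq_right_inv hAR
  rw [sub_eq_add_neg, ← Matrix.mul_neg, Matrix.det_add_mul U (-V) hUnit, hinv]
  rw [Matrix.neg_mul, Matrix.neg_mul, ← sub_eq_add_neg]
  -- compute W = V * R0 * U
  have hW : ∀ s s' : Fin (d+2), (V * R0 * U) s s'
      = if s' = s + 1 then β * (t ^ (q + 1 - xx s) / D) else 0 := by
    intro s s'
    have hVR : ∀ j, (V * R0) s j = β * R0 (pb s, s + 1) j := by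
      intro j
      rw [Matrix.mul_apply, Finset.sum_eq_single ((pb s, s + 1) : Fin (q+2) × Fin (d+2))]
      · rw [hV]; simp
      · intro j' _ hj'
        rw [hV]
        simp [Matrix.of_apply, if_neg hj']
      · intro h
        exact absurd (Finset.mem_univ _) h
    rw [Matrix.mul_apply]
    rw [Finset.sum_eq_single ((pa s', s') : Fin (q+2) × Fin (d+2))]
    · rw [hVR, hU]
      simp only [Matrix.of_apply, if_pos rfl, mul_one]
      by_cases hss : s' = s + 1
      · subst hss
        have hRent : R0 (pb s, s + 1) (pa (s+1), s + 1) = t ^ (q + 1 - xx s) / D := by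
          rw [hR0, Matrix.blockDiagonal_apply_eq]
          have hsub : (pa (s+1) - pb s : Fin (q+2)) = ((xx s : ℕ) : Fin (q+2)) := by
            rw [hpath s]; ring
          have hval : ((pa (s+1) - pb s : Fin (q+2)) : ℕ) = xx s := by
            rw [hsub, Fin.val_cast_of_lt (hxx s)]
          simp only [invBlk, hval]
          rw [if_neg (lt_irrefl _), one_mul, show q+2-1 = q+1 from rfl]
        rw [hRent, if_pos rfl]
        simp
      · have hRent : R0 (pb s, s + 1) (pa s', s') = 0 :=
          Matrix.blockDiagonal_apply_ne _ _ _ (fun hc => hss (Eq.symm hc))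
        rw [hRent, if_neg hss]
        simp
    · intro j _ hj
      rw [hU]
      simp [Matrix.of_apply, if_neg hj]
    · intro h
      exact absurd (Finset.mem_univ _) h
  -- determinant of 1 - W via the cycle lemma
  set W1 : Matrix (Fin (d+2)) (Fin (d+2)) F := 1 - V * R0 * U with hW1
  have hcyc : W1.det = ∏ s : Fin (d+2), W1 s s
        + (-1)^(d+2+1) * ∏ s : Fin (d+2), W1 s (s+1) := by
    refine det_cycle (m := d+2) (by omega) W1 (fun s s' h1 h2 => ?_)
    rw [hW1, Matrix.sub_apply, Matrix.one_apply_ne (Ne.symm h1), hW,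
      if_neg (fun hc => h2 hc), sub_zero]
  have hdiag1 : ∀ s : Fin (d+2), W1 s s = 1 := by
    intro s
    rw [hW1, Matrix.sub_apply, Matrix.one_apply_eq, hW, if_neg (hself s), sub_zero]
  have hoff1 : ∀ s : Fin (d+2), W1 s (s+1) = -(β * (t ^ (q + 1 - xx s) / D)) := by
    intro s
    rw [hW1, Matrix.sub_apply, Matrix.one_apply_ne (hself s), hW, if_pos rfl, zero_sub]
  rw [hcyc]
  rw [Finset.prod_congr rfl (fun s _ => hdiag1 s), Finset.prod_congr rfl (fun s _ => hoff1 s)]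
  rw [Finset.prod_const_one]
  have hprod : ∏ s : Fin (d+2), -(β * (t ^ (q + 1 - xx s) / D))
      = (-1)^(d+2) * (β^(d+2) * (t^z / D^(d+2))) := by
    calc ∏ s : Fin (d+2), -(β * (t ^ (q + 1 - xx s) / D))
        = ∏ s : Fin (d+2), ((-1) * β) * (t ^ (q + 1 - xx s) / D) :=
          Finset.prod_congr rfl (fun s _ => by ring)
      _ = (∏ _s : Fin (d+2), ((-1:F) * β)) * ∏ s : Fin (d+2), (t ^ (q + 1 - xx s) / D) :=
          Finset.prod_mul_distrib
      _ = ((-1)*β)^(d+2) * ((∏ s : Fin (d+2), t ^ (q + 1 - xx s)) / (∏ _s : Fin (d+2), D)) := by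
          rw [Finset.prod_const, Finset.card_univ, Fintype.card_fin, Finset.prod_div_distrib]
      _ = (-1)^(d+2) * (β^(d+2) * (t^z / D^(d+2))) := by
          rw [Finset.prod_pow_eq_pow_sum, hzsum, Finset.prod_const, Finset.card_univ,
            Fintype.card_fin, mul_pow]
          ring
  rw [hprod, hdetA0]
  have hone : (1 + (-1)^(d+2+1) * ((-1)^(d+2) * (β^(d+2) * (t^z / D^(d+2)))))
      = 1 - β^(d+2) * (t^z / D^(d+2)) := by
    have hodd : Odd ((d+3) + (d+2)) := ⟨d+2, by ring⟩
    calc 1 + (-1)^(d+2+1) * ((-1)^(d+2) * (β^(d+2) * (t^z / D^(d+2))))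
        = 1 + ((-1:F))^((d+3)+(d+2)) * (β^(d+2) * (t^z / D^(d+2))) := by ring
      _ = 1 - β^(d+2) * (t^z / D^(d+2)) := by rw [hodd.neg_one_pow]; ring
  rw [hone]
  field_simp

lemma sum_boole_exists {ι M : Type*} [Fintype ι] [AddCommMonoid M] (P : ι → Prop)
    [DecidablePred P] (h : ∀ s t, P s → P t → s = t) (c : M) :
    ∑ s, (if P s then c else 0) = if ∃ s, P s then c else 0 := by
  by_cases hex : ∃ s, P s
  · obtain ⟨s0, hs0⟩ := hex
    rw [if_pos ⟨s0, hs0⟩, Finset.sum_eq_single s0]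
    · rw [if_pos hs0]
    · intro s _ hs
      rw [if_neg (fun hP => hs (h s s0 hP hs0))]
    · intro hc
      exact absurd (Finset.mem_univ s0) hc
  · push_neg at hex
    rw [if_neg (by push_neg; exact fun s hs => (hex s hs).elim)]
    · exact Finset.sum_eq_zero (fun s _ => if_neg (hex s))

lemma lt_qd {q d k p : ℕ} (hk : k < d) (hp : p < q) : k * q + p < q * d := by
  calc k * q + p < k * q + q := Nat.add_lt_add_left hp _
    _ = (k + 1) * q := (Nat.succ_mul k q).symm
    _ ≤ d * q := Nat.mul_le_mul_right q hk
    _ = q * d := Nat.mul_comm d q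

lemma div_mul_add {q : ℕ} (k p : ℕ) (hq : 0 < q) (hp : p < q) : (k * q + p) / q = k := by
  rw [mul_comm, Nat.mul_add_div hq, Nat.div_eq_of_lt hp, add_zero]

lemma mod_mul_add {q : ℕ} (k p : ℕ) (hp : p < q) : (k * q + p) % q = p := by
  rw [mul_comm, Nat.mul_add_mod, Nat.mod_eq_of_lt hp]

/-- the index equivalence between `Fin q × Fin d` and `Fin (q*d)`:
`(p, k) ↦ k*q + p`. -/
def finQD (q d : ℕ) (hq : 0 < q) (hd : 0 < d) : (Fin q × Fin d) ≃ Fin (q * d) where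
  toFun := fun pk => ⟨(pk.2 : ℕ) * q + (pk.1 : ℕ), lt_qd pk.2.isLt pk.1.isLt⟩
  invFun := fun i => (⟨(i : ℕ) % q, Nat.mod_lt _ hq⟩,
    ⟨(i : ℕ) / q, by
      rw [Nat.div_lt_iff_lt_mul hq]
      calc (i : ℕ) < q * d := i.isLt
        _ = d * q := Nat.mul_comm q d⟩)
  left_inv := by
    rintro ⟨p, k⟩
    ext
    · simp [mod_mul_add _ _ p.isLt]
    · simp [div_mul_add _ _ hq p.isLt]
  right_inv := by
    intro i
    ext
    simp only [Fin.val_mk]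
    rw [mul_comm]
    exact Nat.div_add_mod (i : ℕ) q

/-- A matrix is (row) stochastic: nonnegative entries and all row sums equal to 1. -/
def IsStochastic {n : ℕ} (A : Matrix (Fin n) (Fin n) ℝ) : Prop :=
  (∀ i j, 0 ≤ A i j) ∧ ∀ i, ∑ j, A i j = 1

set_option maxHeartbeats 2000000 in
theorem stmt18 (q d z n : ℕ) (hq : 2 ≤ q) (hd : 2 ≤ d) (hz1 : 1 ≤ z) (hz2 : z ≤ q - 1)
    (hn : n = q * d) (α : ℝ) (hα : α ∈ Set.Ioo (0 : ℝ) 1)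
    (x : Fin d → ℕ) (hx : ∀ i, x i ≤ q - 1) (hxsum : ∑ i, x i = n - z - d) :
    -- `a t`, `b t` are the 1-based indices of the extra edges (aₜ, bₜ)
    let a : Fin d → ℕ := fun t =>
      1 + (t : ℕ) * q + (∑ i ∈ Finset.univ.filter (fun i : Fin d => 1 ≤ (i : ℕ) ∧ (i : ℕ) ≤ (t : ℕ)), x i) % q
    let b : Fin d → ℕ := fun t =>
      if (t : ℕ) = d - 1 then 1 + (q - x ⟨0, by omega⟩) % q
      else 1 + ((t : ℕ) + 1) * q + (∑ i ∈ Finset.univ.filter (fun i : Fin d => 1 ≤ (i : ℕ) ∧ (i : ℕ) ≤ (t : ℕ)), x i) % q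
    -- `B` is the block diagonal matrix `⊕ₖ C_q` consisting of `d` copies of the cyclic matrix `C_q`
    let B : Matrix (Fin n) (Fin n) ℝ := fun i j =>
      if (j : ℕ) = ((i : ℕ) / q) * q + (((i : ℕ) % q + 1) % q) then 1 else 0
    let dv : Fin n → ℝ := fun i => if ∃ t : Fin d, (i : ℕ) = a t - 1 then 1 - α else 1
    let A : Matrix (Fin n) (Fin n) ℝ :=
      Matrix.diagonal dv * B +
        α • ∑ t : Fin d,
          Matrix.single
            (⟨(a t - 1) % n, Nat.mod_lt _ (hn ▸ Nat.mul_pos (by omega) (by omega))⟩ : Fin n)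
            (⟨(b t - 1) % n, Nat.mod_lt _ (hn ▸ Nat.mul_pos (by omega) (by omega))⟩ : Fin n) (1 : ℝ)
    IsStochastic A ∧ A.charpoly = (X ^ q - C (1 - α)) ^ d - C (α ^ d) * X ^ z := by
  obtain ⟨hα0, hα1⟩ := hα
  intro a b B dv A
  obtain ⟨q', rfl⟩ : ∃ q'', q = q'' + 2 := ⟨q - 2, by omega⟩
  obtain ⟨d', rfl⟩ : ∃ d'', d = d'' + 2 := ⟨d - 2, by omega⟩
  subst hn
  -- partial sums of x
  set S : Fin (d'+2) → ℕ := fun t =>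
    ∑ i ∈ Finset.univ.filter (fun i : Fin (d'+2) => 1 ≤ (i : ℕ) ∧ (i : ℕ) ≤ (t : ℕ)), x i with hS
  set pa : Fin (d'+2) → Fin (q'+2) := fun t => ⟨S t % (q'+2), Nat.mod_lt _ (by omega)⟩ with hpa
  set pb : Fin (d'+2) → Fin (q'+2) := fun t =>
    ⟨if (t : ℕ) = d'+1 then ((q'+2) - x ⟨0, by omega⟩) % (q'+2) else S t % (q'+2), by
      split <;> exact Nat.mod_lt _ (by omega)⟩ with hpb
  set xx : Fin (d'+2) → ℕ := fun t => x (t + 1) with hxx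
  have ha : ∀ t, a t = 1 + (t : ℕ) * (q'+2) + S t % (q'+2) := fun t => rfl
  have hb : ∀ t, b t = if (t : ℕ) = d'+1 then 1 + ((q'+2) - x ⟨0, by omega⟩) % (q'+2)
      else 1 + ((t : ℕ) + 1) * (q'+2) + S t % (q'+2) := fun t => rfl
  have ha1 : ∀ t, a t - 1 = (t : ℕ) * (q'+2) + (pa t : ℕ) := by
    intro t
    rw [ha t, add_assoc, Nat.add_sub_cancel_left]
  have ha1lt : ∀ t, a t - 1 < (q'+2) * (d'+2) := by
    intro t
    rw [ha1 t]
    exact lt_qd t.isLt (pa t).isLt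
  have hvadd : ∀ t : Fin (d'+2), (t : ℕ) < d'+1 → ((t + 1 : Fin (d'+2)) : ℕ) = (t : ℕ) + 1 := by
    intro t ht
    rw [Fin.val_add_one_of_lt]
    rwa [Fin.lt_iff_val_lt_val, Fin.val_last]
  have hvadd' : ∀ t : Fin (d'+2), (t : ℕ) = d'+1 → (t + 1 : Fin (d'+2)) = 0 := by
    intro t ht
    have : t = Fin.last (d'+1) := by
      apply Fin.ext
      rw [ht, Fin.val_last]
    rw [this, Fin.last_add_one]
  have hb1 : ∀ t, b t - 1 = ((t + 1 : Fin (d'+2)) : ℕ) * (q'+2) + (pb t : ℕ) := by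
    intro t
    rw [hb t, hpb]
    by_cases ht : (t : ℕ) = d'+1
    · rw [if_pos ht]
      simp only [if_pos ht]
      rw [hvadd' t ht]
      simp
    · rw [if_neg ht]
      simp only [if_neg ht]
      rw [hvadd t (by omega)]
      rw [add_assoc, Nat.add_sub_cancel_left]
  have hb1lt : ∀ t, b t - 1 < (q'+2) * (d'+2) := by
    intro t
    rw [hb1 t]
    exact lt_qd (t+1).isLt (pb t).isLt
  have hauniq : ∀ s t : Fin (d'+2), a s - 1 = a t - 1 → s = t := by
    intro s t h
    rw [ha1 s, ha1 t] at h
    have := congrArg (fun m => m / (q'+2)) h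
    simp only [div_mul_add _ _ (by omega) (pa s).isLt, div_mul_add _ _ (by omega) (pa t).isLt] at this
    exact Fin.ext this
  -- entrywise formula for A
  have hstd : ∀ (i0 j0 i j : Fin ((q'+2)*(d'+2))),
      Matrix.single i0 j0 (1:ℝ) i j = if i0 = i ∧ j0 = j then 1 else 0 := by
    intro i0 j0 i j
    rfl
  have hAentry : ∀ i j, A i j = dv i * B i j
      + α * (if (∃ t : Fin (d'+2), (i:ℕ) = a t - 1 ∧ (j:ℕ) = b t - 1) then 1 else 0) := by
    intro i j
    have h1 : A i j = dv i * B i j + α * ∑ t : Fin (d'+2),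
        (if (⟨(a t - 1) % ((q'+2)*(d'+2)), Nat.mod_lt _ (Nat.mul_pos (by omega) (by omega))⟩ : Fin ((q'+2)*(d'+2))) = i
          ∧ (⟨(b t - 1) % ((q'+2)*(d'+2)), Nat.mod_lt _ (Nat.mul_pos (by omega) (by omega))⟩ : Fin ((q'+2)*(d'+2))) = j
         then (1:ℝ) else 0) := by
      show (Matrix.diagonal dv * B + α • ∑ t : Fin (d'+2), _) i j = _
      rw [Matrix.add_apply, Matrix.smul_apply, Matrix.diagonal_mul, Matrix.sum_apply]
      rw [smul_eq_mul]
      congr 1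
    rw [h1]
    congr 1
    congr 1
    have hcond : ∀ t : Fin (d'+2),
        ((⟨(a t - 1) % ((q'+2)*(d'+2)), Nat.mod_lt _ (Nat.mul_pos (by omega) (by omega))⟩ : Fin ((q'+2)*(d'+2))) = i
          ∧ (⟨(b t - 1) % ((q'+2)*(d'+2)), Nat.mod_lt _ (Nat.mul_pos (by omega) (by omega))⟩ : Fin ((q'+2)*(d'+2))) = j)
        ↔ ((i:ℕ) = a t - 1 ∧ (j:ℕ) = b t - 1) := by
      intro t
      rw [Fin.ext_iff, Fin.ext_iff]
      simp only [Fin.val_mk]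
      rw [Nat.mod_eq_of_lt (ha1lt t), Nat.mod_eq_of_lt (hb1lt t)]
      constructor
      · rintro ⟨h1, h2⟩; exact ⟨h1.symm, h2.symm⟩
      · rintro ⟨h1, h2⟩; exact ⟨h1.symm, h2.symm⟩
    calc ∑ t : Fin (d'+2), _ = ∑ t : Fin (d'+2),
        (if ((i:ℕ) = a t - 1 ∧ (j:ℕ) = b t - 1) then (1:ℝ) else 0) :=
          Finset.sum_congr rfl (fun t _ => if_congr (hcond t) rfl rfl)
      _ = _ := sum_boole_exists _ (fun s t hs ht => hauniq s t (by omega)) 1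
    congr 1
  have hdivlt : ∀ i : Fin ((q'+2)*(d'+2)), (i:ℕ)/(q'+2) < d'+2 := by
    intro i
    rw [Nat.div_lt_iff_lt_mul (by omega : 0 < q'+2)]
    calc (i:ℕ) < (q'+2)*(d'+2) := i.isLt
      _ = (d'+2)*(q'+2) := Nat.mul_comm _ _
  have hsucclt : ∀ i : Fin ((q'+2)*(d'+2)),
      ((i:ℕ)/(q'+2))*(q'+2) + (((i:ℕ)%(q'+2)+1)%(q'+2)) < (q'+2)*(d'+2) := by
    intro i
    exact lt_qd (hdivlt i) (Nat.mod_lt _ (by omega))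
  constructor
  · constructor
    · -- nonnegativity
      intro i j
      rw [hAentry i j]
      have hdv : (0:ℝ) ≤ dv i := by
        show (0:ℝ) ≤ if ∃ t : Fin (d'+2), (i : ℕ) = a t - 1 then 1 - α else 1
        split <;> linarith
      have hB : (0:ℝ) ≤ B i j := by
        show (0:ℝ) ≤ if (j:ℕ) = ((i:ℕ)/(q'+2))*(q'+2) + (((i:ℕ)%(q'+2)+1)%(q'+2)) then (1:ℝ) else 0
        split <;> norm_num
      have h2 : (0:ℝ) ≤ (if (∃ t : Fin (d'+2), (i:ℕ) = a t - 1 ∧ (j:ℕ) = b t - 1) then (1:ℝ) else 0) := by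
        split <;> norm_num
      have h3 := mul_nonneg hdv hB
      have h4 := mul_nonneg (le_of_lt hα0) h2
      linarith
    · -- row sums
      intro i
      have hsplit : ∑ j, A i j = dv i * (∑ j, B i j)
          + α * ∑ j : Fin ((q'+2)*(d'+2)),
            (if (∃ t : Fin (d'+2), (i:ℕ) = a t - 1 ∧ (j:ℕ) = b t - 1) then (1:ℝ) else 0) := by
        rw [Finset.sum_congr rfl (fun j _ => hAentry i j), Finset.sum_add_distrib,
          ← Finset.mul_sum, ← Finset.mul_sum]
      have hBsum : (∑ j, B i j) = 1 := by
        have hBj : ∀ j : Fin ((q'+2)*(d'+2)),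
            B i j = if j = (⟨_, hsucclt i⟩ : Fin ((q'+2)*(d'+2))) then (1:ℝ) else 0 := by
          intro j
          show (if (j:ℕ) = ((i:ℕ)/(q'+2))*(q'+2) + (((i:ℕ)%(q'+2)+1)%(q'+2)) then (1:ℝ) else 0) = _
          exact if_congr ⟨fun h => Fin.ext h, fun h => congrArg Fin.val h⟩ rfl rfl
        rw [Finset.sum_congr rfl (fun j _ => hBj j),
          Finset.sum_ite_eq' Finset.univ _ (fun _ => (1:ℝ)), if_pos (Finset.mem_univ _)]
      have h2sum : (∑ j : Fin ((q'+2)*(d'+2)),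
            (if (∃ t : Fin (d'+2), (i:ℕ) = a t - 1 ∧ (j:ℕ) = b t - 1) then (1:ℝ) else 0))
          = if (∃ t : Fin (d'+2), (i:ℕ) = a t - 1) then 1 else 0 := by
        by_cases hex : ∃ t : Fin (d'+2), (i:ℕ) = a t - 1
        · obtain ⟨t0, ht0⟩ := hex
          rw [if_pos ⟨t0, ht0⟩]
          have hiff : ∀ j : Fin ((q'+2)*(d'+2)),
              (∃ t : Fin (d'+2), (i:ℕ) = a t - 1 ∧ (j:ℕ) = b t - 1)
                ↔ j = (⟨b t0 - 1, hb1lt t0⟩ : Fin ((q'+2)*(d'+2))) := by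
            intro j
            constructor
            · rintro ⟨t, ht, hj⟩
              have htt : t = t0 := hauniq t t0 (by omega)
              subst htt
              exact Fin.ext (by rw [hj, Fin.val_mk])
            · intro hj
              exact ⟨t0, ht0, by rw [hj]⟩
          rw [Finset.sum_congr rfl (fun j _ => if_congr (hiff j) rfl rfl),
            Finset.sum_ite_eq' Finset.univ _ (fun _ => (1:ℝ)), if_pos (Finset.mem_univ _)]
        · rw [if_neg hex]
          refine Finset.sum_eq_zero (fun j _ => if_neg ?_)
          rintro ⟨t, ht, _⟩
          exact hex ⟨t, ht⟩
      rw [hsplit, hBsum, h2sum, mul_one]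
      have hdvi : dv i = if (∃ t : Fin (d'+2), (i:ℕ) = a t - 1) then 1 - α else 1 := rfl
      rw [hdvi]
      by_cases hex : ∃ t : Fin (d'+2), (i:ℕ) = a t - 1
      · rw [if_pos hex, if_pos hex]
        ring
      · rw [if_neg hex, if_neg hex]
        ring
  · -- the characteristic polynomial
    have hSsucc : ∀ t : Fin (d'+2), (t:ℕ) < d'+1 → S (t+1) = S t + x (t+1) := by
      intro t ht
      have hins : Finset.univ.filter (fun i : Fin (d'+2) => 1 ≤ (i:ℕ) ∧ (i:ℕ) ≤ (t:ℕ)+1)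
          = insert (t+1) (Finset.univ.filter (fun i : Fin (d'+2) => 1 ≤ (i:ℕ) ∧ (i:ℕ) ≤ (t:ℕ))) := by
        ext i
        simp only [Finset.mem_filter, Finset.mem_insert, Finset.mem_univ, true_and]
        constructor
        · rintro ⟨h1, h2⟩
          by_cases hi : (i:ℕ) = (t:ℕ)+1
          · left
            apply Fin.ext
            rw [hi, hvadd t ht]
          · right
            exact ⟨h1, by omega⟩
        · rintro (h | ⟨h1, h2⟩)
          · subst h
            rw [hvadd t ht]
            omega
          · exact ⟨h1, by omega⟩
      have hnmem : (t+1) ∉ Finset.univ.filter (fun i : Fin (d'+2) => 1 ≤ (i:ℕ) ∧ (i:ℕ) ≤ (t:ℕ)) := by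
        simp only [Finset.mem_filter, Finset.mem_univ, true_and, not_and]
        intro _
        rw [hvadd t ht]
        omega
      have hSval : S (t+1) = ∑ i ∈ Finset.univ.filter
          (fun i : Fin (d'+2) => 1 ≤ (i:ℕ) ∧ (i:ℕ) ≤ (t:ℕ)+1), x i := by
        rw [hS]
        simp only []
        congr 1
        ext i
        simp only [Finset.mem_filter]
        rw [hvadd t ht]
      rw [hSval, hins, Finset.sum_insert hnmem, add_comm]
    have hS0 : S 0 = 0 := by
      rw [hS]
      simp only []
      convert Finset.sum_empty
      ext i
      simp only [Finset.mem_filter, Finset.mem_univ, true_and, Finset.notMem_empty, iff_false,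
        not_and]
      intro h1
      simp only [Fin.val_zero]
      omega
    have hxxlt : ∀ s : Fin (d'+2), xx s < q'+2 := by
      intro s
      have := hx (s+1)
      have hxx1 : xx s = x (s+1) := rfl
      omega
    have hx00 : x ⟨0, by omega⟩ = x (0 : Fin (d'+2)) := by
      congr 1
    have hpath : ∀ s : Fin (d'+2), pa (s+1) = pb s + ((xx s : ℕ) : Fin (q'+2)) := by
      intro s
      apply Fin.ext
      rw [Fin.val_add, Fin.val_cast_of_lt (hxxlt s)]
      by_cases hs : (s:ℕ) = d'+1
      · rw [hvadd' s hs]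
        have hpaval : (pa (0 : Fin (d'+2)) : ℕ) = 0 := by
          show S 0 % (q'+2) = 0
          rw [hS0]
          exact Nat.zero_mod _
        rw [hpaval]
        have hpbval : (pb s : ℕ) = ((q'+2) - x ⟨0, by omega⟩) % (q'+2) := by
          show (if (s : ℕ) = d'+1 then ((q'+2) - x ⟨0, by omega⟩) % (q'+2) else S s % (q'+2)) = _
          rw [if_pos hs]
        rw [hpbval]
        have hxxs : xx s = x ⟨0, by omega⟩ := by
          have h01 : s + 1 = (0 : Fin (d'+2)) := hvadd' s hs
          have h02 : (⟨0, by omega⟩ : Fin (d'+2)) = 0 := by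
            apply Fin.ext
            simp
          rw [h02]
          show x (s+1) = x 0
          rw [h01]
        rw [hxxs]
        rw [Nat.mod_add_mod]
        have : (q'+2) - x ⟨0, by omega⟩ + x ⟨0, by omega⟩ = q'+2 := by
          have := hx ⟨0, by omega⟩
          omega
        rw [this, Nat.mod_self]
      · have hslt : (s:ℕ) < d'+1 := by omega
        have hpaval : (pa (s+1) : ℕ) = S (s+1) % (q'+2) := rfl
        have hpbval : (pb s : ℕ) = S s % (q'+2) := by
          show (if (s : ℕ) = d'+1 then ((q'+2) - x ⟨0, by omega⟩) % (q'+2) else S s % (q'+2)) = _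
          rw [if_neg hs]
        rw [hpaval, hpbval, hSsucc s hslt]
        have hxxs : xx s = x (s+1) := rfl
        rw [Nat.mod_add_mod, hxxs]
    have hxxsum : ∑ s : Fin (d'+2), xx s = ∑ i, x i := by
      rw [hxx]
      exact Equiv.sum_comp (Equiv.addRight (1 : Fin (d'+2))) x
    have hzsum : ∑ s : Fin (d'+2), (q' + 1 - xx s) = z := by
      have h1 : ∀ s : Fin (d'+2), (q'+1 - xx s) + xx s = q'+1 := by
        intro s
        have := hx (s+1)
        have hxx1 : xx s = x (s+1) := rfl
        omega
      have h2 : (∑ s : Fin (d'+2), (q'+1 - xx s)) + (∑ s : Fin (d'+2), xx s)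
          = (d'+2)*(q'+1) := by
        rw [← Finset.sum_add_distrib, Finset.sum_congr rfl (fun s _ => h1 s),
          Finset.sum_const, Finset.card_univ, Fintype.card_fin, smul_eq_mul]
      rw [hxxsum] at h2
      rw [hxsum] at h2
      have hprod : (q'+2)*(d'+2) = (d'+2)*(q'+1) + (d'+2) := by ring
      have hge : q'+1 ≤ (d'+2)*(q'+1) := Nat.le_mul_of_pos_left _ (by omega)
      omega
    -- move to the field of rational functions
    have hφinj : Function.Injective (algebraMap (Polynomial ℝ) (RatFunc ℝ)) :=
      IsFractionRing.injective _ _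
    apply hφinj
    set φ : Polynomial ℝ →+* RatFunc ℝ := (algebraMap (Polynomial ℝ) (RatFunc ℝ)) with hφ
    set tK : RatFunc ℝ := φ X with htK
    set βK : RatFunc ℝ := φ (C α) with hβK
    set γK : RatFunc ℝ := φ (C (1 - α)) with hγK
    have hden : tK ^ (q'+2) - γK ≠ 0 := by
      have hne : (X : Polynomial ℝ)^(q'+2) - C (1-α) ≠ 0 := by
        intro h
        have hco := congrArg (fun p => Polynomial.coeff p (q'+2)) h
        simp only [Polynomial.coeff_sub, Polynomial.coeff_X_pow, if_pos rfl,
          Polynomial.coeff_C, Polynomial.coeff_zero] at hco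
        rw [if_neg (by omega : ¬(q'+2 = 0))] at hco
        norm_num at hco
      intro h
      apply hne
      apply hφinj
      rw [map_sub, map_pow, map_zero]
      exact h
    set e : (Fin (q'+2) × Fin (d'+2)) ≃ Fin ((q'+2)*(d'+2)) :=
      finQD (q'+2) (d'+2) (by omega) (by omega) with he
    have hchar : ∀ i j, charmatrix A i j = (if i = j then (X:Polynomial ℝ) else 0) - C (A i j) := by
      intro i j
      by_cases h : i = j
      · subst h
        rw [charmatrix_apply_eq, if_pos rfl]
      · rw [charmatrix_apply_ne _ _ _ h, if_neg h, zero_sub]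
    -- condition translations
    have hesymm : ∀ i : Fin ((q'+2)*(d'+2)),
        e.symm i = (⟨(i:ℕ)%(q'+2), Nat.mod_lt _ (by omega)⟩, ⟨(i:ℕ)/(q'+2), hdivlt i⟩) :=
      fun i => rfl
    have hE1 : ∀ i j : Fin ((q'+2)*(d'+2)), (i = j) ↔ e.symm i = e.symm j :=
      fun i j => (EmbeddingLike.apply_eq_iff_eq e.symm).symm
    have hE2 : ∀ i j : Fin ((q'+2)*(d'+2)),
        ((j:ℕ) = ((i:ℕ)/(q'+2))*(q'+2) + (((i:ℕ)%(q'+2)+1)%(q'+2)))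
          ↔ ((e.symm j).2 = (e.symm i).2 ∧ (e.symm j).1 = (e.symm i).1 + 1) := by
      intro i j
      rw [hesymm i, hesymm j]
      constructor
      · intro h
        constructor
        · apply Fin.ext
          simp only [Fin.val_mk]
          rw [h]
          exact div_mul_add _ _ (by omega) (Nat.mod_lt _ (by omega))
        · apply Fin.ext
          simp only [Fin.val_mk]
          rw [Fin.val_add, Fin.val_one, Fin.val_mk, h]
          rw [mod_mul_add _ _ (Nat.mod_lt _ (by omega))]
      · rintro ⟨h1, h2⟩
        have hv1 : (j:ℕ)/(q'+2) = (i:ℕ)/(q'+2) := congrArg Fin.val h1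
        have hv2 : (j:ℕ)%(q'+2) = ((i:ℕ)%(q'+2)+1)%(q'+2) := by
          have h3 := congrArg Fin.val h2
          simp only [Fin.val_mk, Fin.val_add, Fin.val_one] at h3
          exact h3
        rw [← hv1, ← hv2]
        exact (Nat.div_add_mod' _ _).symm
    have hE3 : ∀ i : Fin ((q'+2)*(d'+2)),
        (∃ t : Fin (d'+2), (i:ℕ) = a t - 1) ↔ ((e.symm i).1 = pa (e.symm i).2) := by
      intro i
      rw [hesymm i]
      constructor
      · rintro ⟨t, ht⟩
        rw [ha1 t] at ht
        have hki : (⟨(i:ℕ)/(q'+2), hdivlt i⟩ : Fin (d'+2)) = t := by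
          apply Fin.ext
          simp only [Fin.val_mk]
          rw [ht]
          exact div_mul_add _ _ (by omega) (pa t).isLt
        rw [hki]
        apply Fin.ext
        simp only [Fin.val_mk]
        rw [ht]
        exact mod_mul_add _ _ (pa t).isLt
      · intro h
        refine ⟨⟨(i:ℕ)/(q'+2), hdivlt i⟩, ?_⟩
        rw [ha1]
        have hv := congrArg Fin.val h
        simp only [Fin.val_mk] at hv
        simp only [Fin.val_mk]
        rw [← hv]
        exact (Nat.div_add_mod' _ _).symm
    have hE4 : ∀ i j : Fin ((q'+2)*(d'+2)),
        (∃ t : Fin (d'+2), (i:ℕ) = a t - 1 ∧ (j:ℕ) = b t - 1)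
          ↔ ((e.symm i).1 = pa (e.symm i).2
              ∧ e.symm j = (pb (e.symm i).2, (e.symm i).2 + 1)) := by
      intro i j
      rw [hesymm i, hesymm j]
      constructor
      · rintro ⟨t, ht, hj⟩
        rw [ha1 t] at ht
        rw [hb1 t] at hj
        have hki : (⟨(i:ℕ)/(q'+2), hdivlt i⟩ : Fin (d'+2)) = t := by
          apply Fin.ext
          simp only [Fin.val_mk]
          rw [ht]
          exact div_mul_add _ _ (by omega) (pa t).isLt
        have hkj : (j:ℕ)/(q'+2) = ((t + 1 : Fin (d'+2)) : ℕ) := by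
          rw [hj]
          exact div_mul_add _ _ (by omega) (pb t).isLt
        have hpj : (j:ℕ)%(q'+2) = (pb t : ℕ) := by
          rw [hj]
          exact mod_mul_add _ _ (pb t).isLt
        constructor
        · rw [hki]
          apply Fin.ext
          simp only [Fin.val_mk]
          rw [ht]
          exact mod_mul_add _ _ (pa t).isLt
        · rw [hki, Prod.mk.injEq]
          exact ⟨Fin.ext (by simpa using hpj), Fin.ext (by simpa using hkj)⟩
      · rintro ⟨h1, h2⟩
        rw [Prod.mk.injEq] at h2
        obtain ⟨h2a, h2b⟩ := h2
        have hv1 : (i:ℕ)%(q'+2) = (pa ⟨(i:ℕ)/(q'+2), hdivlt i⟩ : ℕ) :=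
          congrArg Fin.val h1
        have hv2 : (j:ℕ)%(q'+2) = (pb ⟨(i:ℕ)/(q'+2), hdivlt i⟩ : ℕ) :=
          congrArg Fin.val h2a
        have hv3 : (j:ℕ)/(q'+2) = ((⟨(i:ℕ)/(q'+2), hdivlt i⟩ + 1 : Fin (d'+2)) : ℕ) :=
          congrArg Fin.val h2b
        refine ⟨⟨(i:ℕ)/(q'+2), hdivlt i⟩, ?_, ?_⟩
        · rw [ha1]
          have h4 : (i:ℕ) = (i:ℕ)/(q'+2)*(q'+2) + (i:ℕ)%(q'+2) := (Nat.div_add_mod' _ _).symm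
          rw [hv1] at h4
          exact h4
        · rw [hb1]
          have h4 : (j:ℕ) = (j:ℕ)/(q'+2)*(q'+2) + (j:ℕ)%(q'+2) := (Nat.div_add_mod' _ _).symm
          rw [hv3, hv2] at h4
          exact h4
    -- value of the mapped entries of A
    have hACij : ∀ i j, φ (C (A i j))
        = (if (j:ℕ) = ((i:ℕ)/(q'+2))*(q'+2) + (((i:ℕ)%(q'+2)+1)%(q'+2))
            then (if (∃ t : Fin (d'+2), (i:ℕ) = a t - 1) then γK else 1) else 0)
          + (if (∃ t : Fin (d'+2), (i:ℕ) = a t - 1 ∧ (j:ℕ) = b t - 1) then βK else 0) := by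
      intro i j
      rw [hAentry i j]
      have hdvi : dv i = if (∃ t : Fin (d'+2), (i:ℕ) = a t - 1) then 1 - α else 1 := rfl
      have hBij : B i j = if (j:ℕ) = ((i:ℕ)/(q'+2))*(q'+2) + (((i:ℕ)%(q'+2)+1)%(q'+2))
          then (1:ℝ) else 0 := rfl
      rw [hdvi, hBij]
      simp only [_root_.map_add, _root_.map_mul, apply_ite C, apply_ite φ, _root_.map_zero,
        _root_.map_one, mul_ite, mul_zero, mul_one, ite_mul, zero_mul, one_mul]
      rfl
    -- matching the charmatrix with the block matrix
    have hmatch : (charmatrix A).map φ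
        = (Matrix.of fun i j : Fin (q'+2) × Fin (d'+2) =>
            (if i = j then tK else 0)
            - (if j.2 = i.2 ∧ j.1 = i.1 + 1 then (if i.1 = pa i.2 then γK else 1) else 0)
            - (if i.1 = pa i.2 ∧ j = (pb i.2, i.2 + 1) then βK else 0)).submatrix
              e.symm e.symm := by
      ext i j
      rw [Matrix.map_apply, Matrix.submatrix_apply, Matrix.of_apply]
      rw [hchar i j, map_sub, apply_ite φ, map_zero]
      rw [hACij i j]
      simp only [hE1 i j, hE2 i j, hE3 i, hE4 i j]
      ring
    -- final assembly
    have hcp : A.charpoly = (charmatrix A).det := rfl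
    rw [hcp, RingHom.map_det, RingHom.mapMatrix_apply, hmatch, Matrix.det_submatrix_equiv_self]
    rw [det_main q' d' z tK βK γK hden pa pb xx hxxlt hpath hzsum]
    rw [htK, hβK, hγK]
    simp only [_root_.map_sub, _root_.map_pow, _root_.map_mul, _root_.map_one]
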